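/- Weighted exponential kernel estimate J₁ (inequality (R1)): let 0 < α < 1, 0 < γ ≤ 1, δ ≥ 0. Then for every t ∈ (0,b], (1/Γ(α)) ∫₀ᵗ ψ'(s)(ψ(t)−ψ(s))^{α−1} e^{δ(ψ(s)−ψ(0))} (ψ(s)−ψ(0))^{γ−1} ds ≤ e^{δ(ψ(b)−ψ(0))} (Γ(γ)/Γ(γ+α)) (ψ(t)−ψ(0))^{α+γ−1}. -/

import Mathlib

open Real MeasureTheory Set Filter Topology

/-- Real Beta integral in terms of Gamma functions. -/
lemma real_beta_integral {u v : ℝ} (hu : 0 < u) (hv : 0 < v) :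
    ∫ x in (0:ℝ)..1, x ^ (u - 1) * (1 - x) ^ (v - 1)
      = Real.Gamma u * Real.Gamma v / Real.Gamma (u + v) := by
  have h := Complex.Gamma_mul_Gamma_eq_betaIntegral (s := (u : ℂ)) (t := (v : ℂ))
    (by simpa using hu) (by simpa using hv)
  have hb : Complex.betaIntegral (u : ℂ) (v : ℂ)
      = ((∫ x in (0:ℝ)..1, x ^ (u - 1) * (1 - x) ^ (v - 1) : ℝ) : ℂ) := by
    rw [Complex.betaIntegral, ← intervalIntegral.integral_ofReal]
    apply intervalIntegral.integral_congr
    intro x hx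
    rw [uIcc_of_le (zero_le_one' ℝ)] at hx
    dsimp only
    rw [Complex.ofReal_mul, Complex.ofReal_cpow hx.1,
      Complex.ofReal_cpow (by linarith [hx.2] : (0:ℝ) ≤ 1 - x)]
    push_cast
    ring
  rw [hb] at h
  have hcast : ((u : ℂ) + (v : ℂ)) = ((u + v : ℝ) : ℂ) := by push_cast; ring
  rw [hcast, Complex.Gamma_ofReal, Complex.Gamma_ofReal, Complex.Gamma_ofReal] at h
  have h' : Real.Gamma u * Real.Gamma v
      = Real.Gamma (u + v) * ∫ x in (0:ℝ)..1, x ^ (u - 1) * (1 - x) ^ (v - 1) := by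
    exact_mod_cast h
  have hΓ : Real.Gamma (u + v) ≠ 0 := (Real.Gamma_pos_of_pos (by linarith)).ne'
  field_simp
  linarith [h']

/-- Integrability of the (shifted, scaled) Beta kernel. -/
lemma beta_kernel_integrable {u v c d : ℝ} (hu : 0 < u) (hv : 0 < v) (hcd : c < d) :
    IntervalIntegrable (fun x => (x - c) ^ (u - 1) * (d - x) ^ (v - 1)) volume c d := by
  set m := (c + d) / 2 with hm
  have hcm : c < m := by rw [hm]; linarith
  have hmd : m < d := by rw [hm]; linarith
  have I1 : IntervalIntegrable (fun x => (x - c) ^ (u - 1)) volume c m := by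
    have := (intervalIntegral.intervalIntegrable_rpow'
      (show (-1:ℝ) < u - 1 by linarith) (a := 0) (b := m - c)).comp_sub_right c
    simpa using this
  have C1 : ContinuousOn (fun x => (d - x) ^ (v - 1)) (Set.uIcc c m) := by
    apply ContinuousOn.rpow_const (by fun_prop)
    intro x hx
    rw [uIcc_of_le hcm.le] at hx
    exact Or.inl (by have := hx.2; intro h; nlinarith [sub_eq_zero.mp h])
  have I2 : IntervalIntegrable (fun x => (d - x) ^ (v - 1)) volume m d := by
    have := (intervalIntegral.intervalIntegrable_rpow'
      (show (-1:ℝ) < v - 1 by linarith) (a := 0) (b := d - m)).comp_sub_left d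
    simpa using this.symm
  have C2 : ContinuousOn (fun x => (x - c) ^ (u - 1)) (Set.uIcc m d) := by
    apply ContinuousOn.rpow_const (by fun_prop)
    intro x hx
    rw [uIcc_of_le hmd.le] at hx
    exact Or.inl (by have := hx.1; intro h; nlinarith [sub_eq_zero.mp h])
  exact (I1.mul_continuousOn C1).trans (I2.continuousOn_mul C2)

/-- Value of the (shifted, scaled) Beta integral. -/
lemma beta_scaled {u v c d : ℝ} (hu : 0 < u) (hv : 0 < v) (hcd : c < d) :
    ∫ x in c..d, (x - c) ^ (u - 1) * (d - x) ^ (v - 1)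
      = (d - c) ^ (u + v - 1) * (Real.Gamma u * Real.Gamma v / Real.Gamma (u + v)) := by
  have hdc : 0 < d - c := sub_pos.2 hcd
  have key := intervalIntegral.integral_comp_mul_add
    (a := 0) (b := 1) (fun x => (x - c) ^ (u - 1) * (d - x) ^ (v - 1)) hdc.ne' c
  simp only [mul_zero, zero_add, mul_one, smul_eq_mul] at key
  have hsum : d - c + c = d := by ring
  rw [hsum] at key
  have congr_eq : (∫ y in (0:ℝ)..1,
        ((d - c) * y + c - c) ^ (u - 1) * (d - ((d - c) * y + c)) ^ (v - 1))
      = (d - c) ^ (u - 1) * (d - c) ^ (v - 1)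
          * ∫ y in (0:ℝ)..1, y ^ (u - 1) * (1 - y) ^ (v - 1) := by
    rw [← intervalIntegral.integral_const_mul]
    apply intervalIntegral.integral_congr
    intro y hy
    rw [uIcc_of_le (zero_le_one' ℝ)] at hy
    have h1 : (0:ℝ) ≤ y := hy.1
    have h2 : (0:ℝ) ≤ 1 - y := by linarith [hy.2]
    dsimp only
    have e1 : (d - c) * y + c - c = (d - c) * y := by ring
    have e2 : d - ((d - c) * y + c) = (d - c) * (1 - y) := by ring
    rw [e1, e2, Real.mul_rpow hdc.le h1, Real.mul_rpow hdc.le h2]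
    ring
  rw [congr_eq, real_beta_integral hu hv] at key
  have : (∫ x in c..d, (x - c) ^ (u - 1) * (d - x) ^ (v - 1))
      = (d - c) * ((d - c) ^ (u - 1) * (d - c) ^ (v - 1)
          * (Real.Gamma u * Real.Gamma v / Real.Gamma (u + v))) := by
    rw [key, ← mul_assoc, mul_inv_cancel₀ hdc.ne', one_mul]
  rw [this, show u + v - 1 = 1 + (u - 1) + (v - 1) by ring, Real.rpow_add hdc,
    Real.rpow_add hdc, Real.rpow_one]
  ring

/-- Weighted exponential kernel estimate J₁ (inequality (R1)). -/
theorem weighted_exp_kernel_estimate_J1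
    (b : ℝ) (hb : 0 < b) (ψ ψ' : ℝ → ℝ)
    (hψ : ∀ t ∈ Icc (0:ℝ) b, HasDerivWithinAt ψ (ψ' t) (Icc (0:ℝ) b) t)
    (hψ'c : ContinuousOn ψ' (Icc (0:ℝ) b))
    (hψ'pos : ∀ t ∈ Icc (0:ℝ) b, 0 < ψ' t)
    (hψmono : StrictMonoOn ψ (Icc (0:ℝ) b))
    (α γ δ : ℝ) (hα0 : 0 < α) (hα1 : α < 1) (hγ0 : 0 < γ) (hγ1 : γ ≤ 1) (hδ : 0 ≤ δ) :
    ∀ t ∈ Ioc (0:ℝ) b,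
      (Real.Gamma α)⁻¹
          * ∫ s in (0:ℝ)..t, ψ' s * (ψ t - ψ s) ^ (α - 1)
              * (Real.exp (δ * (ψ s - ψ 0)) * (ψ s - ψ 0) ^ (γ - 1))
        ≤ Real.exp (δ * (ψ b - ψ 0)) * (Real.Gamma γ / Real.Gamma (γ + α))
            * (ψ t - ψ 0) ^ (α + γ - 1) := by
  intro t ht
  obtain ⟨ht0, htb⟩ := ht
  have h0mem : (0:ℝ) ∈ Icc (0:ℝ) b := ⟨le_rfl, hb.le⟩
  have htmem : t ∈ Icc (0:ℝ) b := ⟨ht0.le, htb⟩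
  have hbmem : b ∈ Icc (0:ℝ) b := ⟨hb.le, le_rfl⟩
  set c := ψ 0 with hc
  set d := ψ t with hd
  have hcd : c < d := hψmono h0mem htmem ht0
  have hdc : 0 < d - c := sub_pos.2 hcd
  have hdb : d ≤ ψ b := (hψmono.monotoneOn) htmem hbmem htb
  set E := Real.exp (δ * (ψ b - ψ 0)) with hE
  set g : ℝ → ℝ := fun u => (u - c) ^ (γ - 1) * (d - u) ^ (α - 1) * Real.exp (δ * (u - c))
    with hg
  set K : ℝ → ℝ := fun u => (u - c) ^ (γ - 1) * (d - u) ^ (α - 1) with hK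
  -- continuity of ψ
  have hψcont : ContinuousOn ψ (Icc (0:ℝ) b) := fun x hx => (hψ x hx).continuousWithinAt
  have hsub0t : Icc (0:ℝ) t ⊆ Icc (0:ℝ) b := Icc_subset_Icc le_rfl htb
  have hmapsto : ∀ s ∈ Icc (0:ℝ) t, ψ s ∈ Icc c d := by
    intro s hs
    exact ⟨hψmono.monotoneOn h0mem (hsub0t hs) hs.1,
      hψmono.monotoneOn (hsub0t hs) htmem hs.2⟩
  -- integrability of the kernel and of g on [c, d]
  have hKint : IntervalIntegrable K volume c d := beta_kernel_integrable hγ0 hα0 hcd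
  have hgint : IntervalIntegrable g volume c d := by
    have hexp : ContinuousOn (fun u => Real.exp (δ * (u - c))) (Set.uIcc c d) := by fun_prop
    exact hKint.mul_continuousOn hexp
  -- IntegrableOn versions on Icc c d
  have hgIcc : IntegrableOn g (Icc c d) := by
    have := (intervalIntegrable_iff' (by simp)).mp hgint
    rwa [uIcc_of_le hcd.le] at this
  -- pointwise bound g ≤ E * K on Icc c d
  have hpt : ∀ u ∈ Icc c d, g u ≤ E * K u := by
    intro u hu
    have h1 : Real.exp (δ * (u - c)) ≤ E := by
      rw [hE]
      apply Real.exp_le_exp.mpr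
      have : u ≤ ψ b := le_trans hu.2 hdb
      exact mul_le_mul_of_nonneg_left (sub_le_sub_right this c) hδ
    have hKnn : 0 ≤ K u :=
      mul_nonneg (Real.rpow_nonneg (sub_nonneg.2 hu.1) _)
        (Real.rpow_nonneg (sub_nonneg.2 hu.2) _)
    calc g u = Real.exp (δ * (u - c)) * K u := by rw [hg, hK]; ring
      _ ≤ E * K u := mul_le_mul_of_nonneg_right h1 hKnn
  -- change of variables
  have huIcc : (Set.uIcc (0:ℝ) t) = Icc (0:ℝ) t := uIcc_of_le ht0.le
  have hf : ContinuousOn ψ (Set.uIcc (0:ℝ) t) := by rw [huIcc]; exact hψcont.mono hsub0t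
  have hff' : ∀ x ∈ Ioo (min (0:ℝ) t) (max (0:ℝ) t),
      HasDerivWithinAt ψ (ψ' x) (Ioi x) x := by
    intro x hx
    rw [min_eq_left ht0.le, max_eq_right ht0.le] at hx
    have hxb : x ∈ Icc (0:ℝ) b := ⟨hx.1.le, (hx.2.trans_le htb).le⟩
    exact ((hψ x hxb).hasDerivAt
      (Icc_mem_nhds hx.1 (hx.2.trans_le htb))).hasDerivWithinAt
  have hgcont : ContinuousOn g (ψ '' Ioo (min (0:ℝ) t) (max (0:ℝ) t)) := by
    rw [min_eq_left ht0.le, max_eq_right ht0.le]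
    have himg : ψ '' Ioo (0:ℝ) t ⊆ Ioo c d := by
      rintro u ⟨s, hs, rfl⟩
      have hsmem : s ∈ Icc (0:ℝ) b := ⟨hs.1.le, (hs.2.trans_le htb).le⟩
      exact ⟨hψmono h0mem hsmem hs.1, hψmono hsmem htmem hs.2⟩
    have : ContinuousOn g (Ioo c d) := by
      apply ContinuousOn.mul
      apply ContinuousOn.mul
      · exact ContinuousOn.rpow_const (by fun_prop)
          (fun u hu => Or.inl (sub_pos.2 hu.1).ne')
      · exact ContinuousOn.rpow_const (by fun_prop)
          (fun u hu => Or.inl (sub_pos.2 hu.2).ne')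
      · fun_prop
    exact this.mono himg
  have himIcc : ψ '' Icc (0:ℝ) t ⊆ Icc c d := by
    rintro u ⟨s, hs, rfl⟩; exact hmapsto s hs
  have hg1 : IntegrableOn g (ψ '' (Set.uIcc (0:ℝ) t)) := by
    rw [huIcc]
    exact hgIcc.mono_set himIcc
  have hg2 : IntegrableOn (fun x => ψ' x • (g ∘ ψ) x) (Set.uIcc (0:ℝ) t) := by
    rw [huIcc]
    have hinj : InjOn ψ (Icc (0:ℝ) t) := hψmono.injOn.mono hsub0t
    have hder : ∀ x ∈ Icc (0:ℝ) t, HasDerivWithinAt ψ (ψ' x) (Icc (0:ℝ) t) x :=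
      fun x hx => (hψ x (hsub0t hx)).mono hsub0t
    have habs : IntegrableOn (fun x => |ψ' x| • g (ψ x)) (Icc (0:ℝ) t) :=
      (integrableOn_image_iff_integrableOn_abs_deriv_smul measurableSet_Icc hder hinj g).mp
        (hgIcc.mono_set himIcc)
    apply habs.congr_fun _ measurableSet_Icc
    intro x hx
    simp only [Function.comp_apply, abs_of_pos (hψ'pos x (hsub0t hx))]
  have hsubst : (∫ s in (0:ℝ)..t, ψ' s • (g ∘ ψ) s) = ∫ u in c..d, g u := by
    rw [hc, hd]
    exact intervalIntegral.integral_comp_smul_deriv''' hf hff' hgcont hg1 hg2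
  -- the original integrand equals ψ' s • (g ∘ ψ) s
  have horig : (∫ s in (0:ℝ)..t, ψ' s * (ψ t - ψ s) ^ (α - 1)
        * (Real.exp (δ * (ψ s - ψ 0)) * (ψ s - ψ 0) ^ (γ - 1)))
      = ∫ s in (0:ℝ)..t, ψ' s • (g ∘ ψ) s := by
    apply intervalIntegral.integral_congr
    intro s _
    simp only [smul_eq_mul, Function.comp_apply, hg, ← hc, ← hd]
    ring
  -- compare with E * K
  have hmono : (∫ u in c..d, g u) ≤ ∫ u in c..d, E * K u := by
    apply intervalIntegral.integral_mono_on hcd.le hgint (hKint.const_mul E) hpt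
  have hKval : (∫ u in c..d, K u)
      = (d - c) ^ (γ + α - 1) * (Real.Gamma γ * Real.Gamma α / Real.Gamma (γ + α)) :=
    beta_scaled hγ0 hα0 hcd
  have hEK : (∫ u in c..d, E * K u)
      = E * ((d - c) ^ (γ + α - 1)
          * (Real.Gamma γ * Real.Gamma α / Real.Gamma (γ + α))) := by
    rw [intervalIntegral.integral_const_mul, hKval]
  -- put everything together
  have hΓα : 0 < Real.Gamma α := Real.Gamma_pos_of_pos hα0
  have hΓγα : 0 < Real.Gamma (γ + α) := Real.Gamma_pos_of_pos (by linarith)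
  have hchain : (∫ s in (0:ℝ)..t, ψ' s * (ψ t - ψ s) ^ (α - 1)
        * (Real.exp (δ * (ψ s - ψ 0)) * (ψ s - ψ 0) ^ (γ - 1)))
      ≤ E * ((d - c) ^ (γ + α - 1)
          * (Real.Gamma γ * Real.Gamma α / Real.Gamma (γ + α))) := by
    rw [horig, hsubst]
    exact hmono.trans_eq hEK
  have step := mul_le_mul_of_nonneg_left hchain (inv_nonneg.2 hΓα.le)
  refine step.trans_eq ?_
  rw [show α + γ - 1 = γ + α - 1 by ring]
  have hEpos : (0:ℝ) < E := Real.exp_pos _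
  field_simp
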